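/- (2π-rotation form of the half-odd-integer LSM obstruction.) Let N ≥ 1, let ι be a finite type, let A : ι → Matrix (Fin N) (Fin N) ℂ, and suppose there exists a unitary matrix X ∈ Matrix (Fin N) (Fin N) ℂ such that Xᴴ * A m * X = -(A m) for every m : ι (the on-site 2π rotation acts as −1 on the physical spin, i.e. the spin is half-odd-integer, and is implemented by X on the bond space). Then for every I ≥ 1 the map Γ_I is not injective. -/

import Mathlib

open Matrix

/-- The MPS map `Γ_I`: given an MPS tensor `A`, length `I` and a boundary matrix `M`,
returns the coefficient function `σ ↦ trace (M * A (σ 0) * ⋯ * A (σ (I-1)))`. -/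
noncomputable def GammaMPS {N : ℕ} {ι : Type*} (A : ι → Matrix (Fin N) (Fin N) ℂ)
    (I : ℕ) (M : Matrix (Fin N) (Fin N) ℂ) : (Fin I → ι) → ℂ :=
  fun σ => Matrix.trace (M * (List.ofFn fun i => A (σ i)).prod)

/-- 2π-rotation form of the half-odd-integer LSM obstruction: if the on-site 2π rotation
acts as `-1` on the physical spin and is implemented by a unitary `X` on the bond space,
then the MPS is not injective at any length. -/
theorem two_pi_rotation_LSM {N : ℕ} (hN : 1 ≤ N) {ι : Type*} [Fintype ι]
    (A : ι → Matrix (Fin N) (Fin N) ℂ)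
    (X : Matrix (Fin N) (Fin N) ℂ)
    (hX : X ∈ Matrix.unitaryGroup (Fin N) ℂ)
    (hrot : ∀ m : ι, Xᴴ * A m * X = -(A m)) :
    ∀ I, 1 ≤ I → ¬ Function.Injective (GammaMPS A I) := by
  intro I hI hinj
  have h1 : Xᴴ * X = 1 := hX.1
  have h2 : X * Xᴴ = 1 := hX.2
  -- conjugation of products
  have conj : ∀ l : List ι, Xᴴ * (l.map A).prod * X
      = ((-1 : ℂ) ^ l.length) • (l.map A).prod := by
    intro l
    induction l with
    | nil => simp [h1]
    | cons a l ih =>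
        set P := (l.map A).prod with hP
        have e : (Xᴴ * A a * X) * (Xᴴ * P * X) = Xᴴ * (A a * P) * X := by
          simp only [← mul_assoc]
          rw [mul_assoc (Xᴴ * A a) X Xᴴ, h2, mul_one]
        simp only [List.map_cons, List.prod_cons, List.length_cons]
        rw [← e, hrot a, ih, pow_succ, neg_mul, mul_smul_comm, ← hP]
        module
  have conjσ : ∀ (σ : Fin I → ι), Xᴴ * (List.ofFn fun i => A (σ i)).prod * X
      = ((-1 : ℂ) ^ I) • (List.ofFn fun i => A (σ i)).prod := by
    intro σ
    have : (List.ofFn fun i => A (σ i)) = (List.ofFn σ).map A := by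
      simp only [List.map_ofFn]; rfl
    rw [this]
    simpa using conj (List.ofFn σ)
  -- key identity
  have key : ∀ M, X * M * Xᴴ = ((-1 : ℂ) ^ I) • M := by
    intro M
    apply hinj
    funext σ
    simp only [GammaMPS]
    set P := (List.ofFn fun i => A (σ i)).prod with hP
    have : Matrix.trace (X * M * Xᴴ * P) = Matrix.trace (M * (Xᴴ * P * X)) := by
      rw [Matrix.trace_mul_comm (X * M * Xᴴ) P]
      simp only [← mul_assoc]
      rw [Matrix.trace_mul_comm (P * X * M) Xᴴ]
      simp only [← mul_assoc]
      rw [Matrix.trace_mul_comm (Xᴴ * P * X) M]; simp [mul_assoc]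
    rw [this, conjσ σ]
    simp [Matrix.smul_mul, mul_smul_comm, hP]
  have z : Fin N := ⟨0, hN⟩
  have hone : (1 : Matrix (Fin N) (Fin N) ℂ) = ((-1 : ℂ) ^ I) • 1 := by
    have := key 1
    rwa [mul_one, h2] at this
  have hc : (1 : ℂ) = (-1 : ℂ) ^ I := by
    have := congrFun (congrFun hone z) z
    simpa using this
  have key' : ∀ M, X * M * Xᴴ = M := by
    intro M; rw [key M, ← hc, one_smul]
  have hcomm : ∀ M : Matrix (Fin N) (Fin N) ℂ, X * M = M * X := by
    intro M
    have := congrArg (· * X) (key' M)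
    simpa [mul_assoc, h1] using this
  have hA0 : ∀ m, A m = 0 := by
    intro m
    have hm : A m = -(A m) := by
      have := hrot m
      rw [mul_assoc, ← hcomm (A m), ← mul_assoc, h1, one_mul] at this
      exact this
    ext i j
    have h := congrFun (congrFun hm i) j
    simp only [Matrix.neg_apply, Matrix.zero_apply] at h ⊢
    linear_combination h / 2
  have hG : GammaMPS A I 1 = GammaMPS A I 0 := by
    funext σ
    obtain ⟨n, rfl⟩ : ∃ n, I = n + 1 := ⟨I - 1, by omega⟩
    simp [GammaMPS, List.ofFn_succ, hA0]
  have := hinj hG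
  have := congrFun (congrFun this z) z
  simp at this
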